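/- With the setup of the stacked matrix G = [G_k; B] built from shifts of g(x)=∏_{j=1}^{n−k}(x−a^j) and f(x)=∏_{j=1}^{n−d}(x−a^j): if u(x)g(x) = −f(x)·Σ_{i=0}^{ℓ−1} b_i x^{j_i−1} for some polynomial u and some scalars b_i with 1 ≤ j_0 < … < j_{ℓ−1} ≤ d−k−1 and ℓ ≤ d−k−1, then all b_i = 0 and u = 0. -/

import Mathlib

theorem stmt8 {F : Type*} [Field F] [Fintype F] (a : F) (n k d : ℕ)
    (hn : n = Fintype.card F - 1) (ha : IsPrimitiveRoot a n)
    (hkd : k < d) (hdn : d ≤ n - 1)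
    (ℓ : ℕ) (hℓ : ℓ ≤ d - k - 1) (j : Fin ℓ → ℕ) (hjmono : StrictMono j)
    (hj1 : ∀ i, 1 ≤ j i) (hjd : ∀ i, j i ≤ d - k - 1)
    (b : Fin ℓ → F) (u : Polynomial F)
    (heq : u * (∏ t ∈ Finset.Icc 1 (n - k), (Polynomial.X - Polynomial.C (a ^ t))) =
      -((∏ t ∈ Finset.Icc 1 (n - d), (Polynomial.X - Polynomial.C (a ^ t))) *
        ∑ i, Polynomial.C (b i) * Polynomial.X ^ (j i - 1))) :
    (∀ i, b i = 0) ∧ u = 0 := by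
  set g : Polynomial F := ∏ t ∈ Finset.Icc 1 (n - k), (Polynomial.X - Polynomial.C (a ^ t))
    with hg
  set f : Polynomial F := ∏ t ∈ Finset.Icc 1 (n - d), (Polynomial.X - Polynomial.C (a ^ t))
    with hf
  set p : Polynomial F := ∑ i, Polynomial.C (b i) * Polynomial.X ^ (j i - 1) with hp
  have hgm : g.Monic := Polynomial.monic_prod_of_monic _ _ fun t _ => Polynomial.monic_X_sub_C _
  have hfm : f.Monic := Polynomial.monic_prod_of_monic _ _ fun t _ => Polynomial.monic_X_sub_C _
  have hgdeg : g.degree = ((n - k : ℕ) : WithBot ℕ) := by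
    rw [hg, Polynomial.degree_prod,
      Finset.sum_congr rfl fun t _ => Polynomial.degree_X_sub_C (a ^ t)]
    simp
  have hfdeg : f.degree = ((n - d : ℕ) : WithBot ℕ) := by
    rw [hf, Polynomial.degree_prod,
      Finset.sum_congr rfl fun t _ => Polynomial.degree_X_sub_C (a ^ t)]
    simp
  have hpdeg : p.degree ≤ ((d - k - 2 : ℕ) : WithBot ℕ) := by
    refine le_trans (Polynomial.degree_sum_le _ _) (Finset.sup_le fun i _ => ?_)
    refine le_trans (Polynomial.degree_C_mul_X_pow_le _ _) ?_
    have hji : j i - 1 ≤ d - k - 2 := by have := hj1 i; have := hjd i; omega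
    exact_mod_cast hji
  have hu : u = 0 := by
    by_contra hu0
    have h1 : ((n - k : ℕ) : WithBot ℕ) ≤ (u * g).degree := by
      rw [mul_comm]
      rw [← hgdeg]
      exact Polynomial.degree_le_mul_left g hu0
    have h2 : (u * g).degree ≤ ((n - d : ℕ) : WithBot ℕ) + ((d - k - 2 : ℕ) : WithBot ℕ) := by
      rw [heq, Polynomial.degree_neg, Polynomial.degree_mul, hfdeg]
      exact add_le_add le_rfl hpdeg
    have h3 : ((n - k : ℕ) : WithBot ℕ) ≤ (((n - d) + (d - k - 2) : ℕ) : WithBot ℕ) := by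
      push_cast
      exact le_trans h1 h2
    have h4 : (n - k : ℕ) ≤ (n - d) + (d - k - 2) := by exact_mod_cast h3
    omega
  have hfp : f * p = 0 := by
    have := heq
    rw [hu, zero_mul] at this
    have := this.symm
    rwa [neg_eq_zero] at this
  have hpz : p = 0 := by
    rcases mul_eq_zero.mp hfp with h | h
    · exact absurd h hfm.ne_zero
    · exact h
  refine ⟨fun i => ?_, hu⟩
  have hc : p.coeff (j i - 1) = b i := by
    rw [hp, Polynomial.finset_sum_coeff]
    rw [Finset.sum_eq_single i]
    · simp
    · intro i' _ hne
      rw [Polynomial.coeff_C_mul, Polynomial.coeff_X_pow, if_neg, mul_zero]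
      intro h
      exact hne (hjmono.injective (by have := hj1 i; have := hj1 i'; omega))
    · simp
  rw [hpz] at hc
  simpa using hc.symm
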